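/- Barbalat's lemma: if f : [0,∞) → ℝ is uniformly continuous and lim_{t→∞} ∫₀ᵗ f(s) ds exists and is finite, then lim_{t→∞} f(t) = 0. -/
import Mathlib


open Filter

/-- Barbalat's lemma: if `f : [0,∞) → ℝ` is uniformly continuous and
`∫₀ᵗ f` converges to a finite limit as `t → ∞`, then `f(t) → 0`. -/
theorem barbalat (f : ℝ → ℝ)
    (huc : UniformContinuousOn f (Set.Ici 0))
    (L : ℝ)
    (hint : Tendsto (fun t : ℝ => ∫ s in (0:ℝ)..t, f s) atTop (nhds L)) :
    Tendsto f atTop (nhds 0) := by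
  have hcont : ContinuousOn f (Set.Ici 0) := huc.continuousOn
  have hInt : ∀ a b : ℝ, 0 ≤ a → 0 ≤ b →
      IntervalIntegrable f MeasureTheory.volume a b := by
    intro a b ha hb
    apply (hcont.mono ?_).intervalIntegrable
    intro x hx
    rw [Set.mem_uIcc] at hx
    rcases hx with h | h
    · exact le_trans ha h.1
    · exact le_trans hb h.1
  by_contra hnot
  rw [Metric.tendsto_atTop] at hnot
  push_neg at hnot
  obtain ⟨ε, hε, hfreq⟩ := hnot
  rw [Metric.uniformContinuousOn_iff] at huc
  obtain ⟨δ, hδpos, hδ⟩ := huc (ε/2) (by positivity)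
  set d : ℝ := δ/2 with hd
  have hdpos : 0 < d := by positivity
  have htend : Tendsto (fun t : ℝ => (∫ s in (0:ℝ)..(t+d), f s) - ∫ s in (0:ℝ)..t, f s)
      atTop (nhds 0) := by
    have h1 : Tendsto (fun t : ℝ => ∫ s in (0:ℝ)..(t+d), f s) atTop (nhds L) :=
      hint.comp (tendsto_atTop_add_const_right _ d tendsto_id)
    simpa using h1.sub hint
  have hev : ∀ᶠ t in atTop,
      |(∫ s in (0:ℝ)..(t+d), f s) - ∫ s in (0:ℝ)..t, f s| < d * (ε/2) := by
    have := Metric.tendsto_nhds.mp htend (d * (ε/2)) (by positivity)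
    simpa [Real.dist_eq] using this
  rw [eventually_atTop] at hev
  obtain ⟨N, hN⟩ := hev
  obtain ⟨t, ht, hft⟩ := hfreq (max N 0)
  have htN : N ≤ t := le_trans (le_max_left _ _) ht
  have ht0 : (0:ℝ) ≤ t := le_trans (le_max_right _ _) ht
  have hft' : ε ≤ |f t| := by simpa [Real.dist_eq] using hft
  have hdiff : (∫ s in (0:ℝ)..(t+d), f s) - ∫ s in (0:ℝ)..t, f s
      = ∫ s in t..(t+d), f s := by
    rw [← intervalIntegral.integral_add_adjacent_intervals (hInt 0 t le_rfl ht0)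
      (hInt t (t+d) ht0 (by linarith))]
    ring
  have hpt : ∀ s ∈ Set.Icc t (t+d), |f s - f t| < ε/2 := by
    intro s hs
    have hs0 : s ∈ Set.Ici (0:ℝ) := le_trans ht0 hs.1
    have hdist : dist s t < δ := by
      rw [Real.dist_eq, abs_of_nonneg (by linarith [hs.1])]
      have h2 : d < δ := by rw [hd]; linarith
      linarith [hs.2]
    simpa [Real.dist_eq] using hδ s hs0 t (Set.mem_Ici.mpr ht0) hdist
  have key : d * (ε/2) ≤ |∫ s in t..(t+d), f s| := by
    rcases le_or_gt 0 (f t) with h | h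
    · have hft2 : ε ≤ f t := by rwa [abs_of_nonneg h] at hft'
      have hlow : ∀ s ∈ Set.Icc t (t+d), ε/2 ≤ f s := by
        intro s hs
        have h2 := abs_lt.mp (hpt s hs)
        linarith [h2.1]
      have hmono : (∫ _ in t..(t+d), (ε/2 : ℝ)) ≤ ∫ s in t..(t+d), f s :=
        intervalIntegral.integral_mono_on (by linarith) intervalIntegrable_const
          (hInt t (t+d) ht0 (by linarith)) hlow
      rw [intervalIntegral.integral_const, smul_eq_mul] at hmono
      have : d * (ε/2) ≤ ∫ s in t..(t+d), f s := by
        have : t + d - t = d := by ring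
        rw [this] at hmono; exact hmono
      exact le_trans this (le_abs_self _)
    · have hft2 : f t ≤ -ε := by
        rw [abs_of_neg h] at hft'; linarith
      have hhigh : ∀ s ∈ Set.Icc t (t+d), f s ≤ -(ε/2) := by
        intro s hs
        have h2 := abs_lt.mp (hpt s hs)
        linarith [h2.2]
      have hmono : (∫ s in t..(t+d), f s) ≤ ∫ _ in t..(t+d), (-(ε/2) : ℝ) :=
        intervalIntegral.integral_mono_on (by linarith)
          (hInt t (t+d) ht0 (by linarith)) intervalIntegrable_const hhigh
      rw [intervalIntegral.integral_const, smul_eq_mul] at hmono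
      have hle : (∫ s in t..(t+d), f s) ≤ -(d * (ε/2)) := by
        have : t + d - t = d := by ring
        rw [this] at hmono; linarith
      calc d * (ε/2) ≤ -(∫ s in t..(t+d), f s) := by linarith
        _ ≤ |∫ s in t..(t+d), f s| := neg_le_abs _
  have hb := hN t htN
  rw [hdiff] at hb
  exact absurd hb (not_lt.mpr key)
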